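/- arXiv:1412.3501 — 2 statements merged into one kernel-verified Lean document; each statement's English description precedes it below -/
import Mathlib

section
/- Let α, q : ℝ → ℝ≥0 be measurable with q a probability density, ∫α(x)dx ∈ (0,∞), and α(x) = 0 whenever q(x) = 0. Suppose (X^{i,l}_k(j)), for i ∈ {1..N}, l ∈ {1..M}, j ∈ {1..d}, k ∈ {1..n}, are i.i.d. with density q. Define p^{N,M} = ∏_{k=1}^n (1/N)∑_{i=1}^N ∏_{j=1}^d (1/M)∑_{l=1}^M α(X^{i,l}_k(j))/q(X^{i,l}_k(j)), and p = (∫α(x)dx)^{nd}. If ρ := ∫α(x)^2/q(x)dx / (∫α(x)dx)^2 < ∞, then E[(p^{N,M}/p − 1)^2] = ((1/N)((ρ/M) + (M−1)/M)^d + (N−1)/N)^n − 1. -/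
open MeasureTheory ProbabilityTheory

open scoped ENNReal NNReal
set_option linter.unusedSectionVars false
set_option linter.unusedVariables false

open scoped ENNReal NNReal

theorem pi_integral_prod {κ E : Type*} [Fintype κ] [MeasurableSpace E]
    (ν : Measure E) [IsProbabilityMeasure ν] (f : κ → E → ℝ) :
    ∫ x : κ → E, ∏ i, f i (x i) ∂(Measure.pi fun _ => ν) = ∏ i, ∫ x, f i x ∂ν := by
  letI : MeasureSpace E := ⟨ν⟩
  haveI : SigmaFinite (volume : Measure E) := inferInstanceAs (SigmaFinite ν)
  exact integral_fintype_prod_eq_prod f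

theorem pi_integrable_prod {κ E : Type*} [Fintype κ] [MeasurableSpace E]
    (ν : Measure E) [IsProbabilityMeasure ν] (f : κ → E → ℝ) (hf : ∀ i, Integrable (f i) ν) :
    Integrable (fun x : κ → E => ∏ i, f i (x i)) (Measure.pi fun _ => ν) := by
  letI : MeasureSpace E := ⟨ν⟩
  haveI : SigmaFinite (volume : Measure E) := inferInstanceAs (SigmaFinite ν)
  exact Integrable.fintype_prod hf

section marg
variable {κ E : Type*} [Fintype κ] [MeasurableSpace E]
    (ν : Measure E) [IsProbabilityMeasure ν] [DecidableEq κ]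

theorem prod_single (i₀ : κ) (g : E → ℝ) (x : κ → E) :
    (∏ i, (if i = i₀ then g else fun _ => (1:ℝ)) (x i)) = g (x i₀) := by
  rw [Finset.prod_eq_single i₀] <;> simp (config := {contextual := true})

theorem pi_integral_marg (i₀ : κ) (g : E → ℝ) :
    ∫ x : κ → E, g (x i₀) ∂(Measure.pi fun _ => ν) = ∫ x, g x ∂ν := by
  have := pi_integral_prod ν (fun i => if i = i₀ then g else fun _ => (1:ℝ))
  simp only [prod_single] at this
  rw [this, Finset.prod_eq_single i₀] <;>
    simp (config := {contextual := true}) [integral_const]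

theorem pi_integrable_marg (i₀ : κ) (g : E → ℝ) (hg : Integrable g ν) :
    Integrable (fun x : κ → E => g (x i₀)) (Measure.pi fun _ => ν) := by
  have := pi_integrable_prod ν (fun i => if i = i₀ then g else fun _ => (1:ℝ))
    (fun i => by split <;> simp [hg, integrable_const])
  simpa only [prod_single] using this

theorem prod_pair {i₁ i₂ : κ} (hne : i₁ ≠ i₂) (g h : E → ℝ) (x : κ → E) :
    (∏ i, (if i = i₁ then g else if i = i₂ then h else fun _ => (1:ℝ)) (x i))
      = g (x i₁) * h (x i₂) := by
  classical
  rw [← Finset.prod_subset (Finset.subset_univ {i₁, i₂})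
    (by intro i _ hi; simp only [Finset.mem_insert, Finset.mem_singleton, not_or] at hi
        simp [hi.1, hi.2]),
    Finset.prod_pair hne]
  simp [hne, hne.symm]

theorem pi_integral_pair {i₁ i₂ : κ} (hne : i₁ ≠ i₂) (g h : E → ℝ) :
    ∫ x : κ → E, g (x i₁) * h (x i₂) ∂(Measure.pi fun _ => ν)
      = (∫ x, g x ∂ν) * ∫ x, h x ∂ν := by
  have := pi_integral_prod ν (fun i => if i = i₁ then g else if i = i₂ then h else fun _ => (1:ℝ))
  simp only [prod_pair hne] at this
  rw [this, ← Finset.prod_subset (Finset.subset_univ {i₁, i₂})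
    (by intro i _ hi; simp only [Finset.mem_insert, Finset.mem_singleton, not_or] at hi
        simp [hi.1, hi.2, integral_const]),
    Finset.prod_pair hne]
  simp [hne, hne.symm]

theorem pi_integrable_pair {i₁ i₂ : κ} (hne : i₁ ≠ i₂) (g h : E → ℝ)
    (hg : Integrable g ν) (hh : Integrable h ν) :
    Integrable (fun x : κ → E => g (x i₁) * h (x i₂)) (Measure.pi fun _ => ν) := by
  have := pi_integrable_prod ν
    (fun i => if i = i₁ then g else if i = i₂ then h else fun _ => (1:ℝ))
    (fun i => by split; · exact hg
                 split; · exact hh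
                 · simp [integrable_const])
  simpa only [prod_pair hne] using this

end marg

section layers
variable {E : Type*} [MeasurableSpace E] (ν : Measure E) [IsProbabilityMeasure ν]
  (K : ℕ) (g : E → ℝ)

/-- Average layer: S w = (1/K) ∑ i, g (w i) on Fin K → E. -/

theorem avg_measurable (hgm : Measurable g) :
    Measurable (fun w : Fin K → E => (1 / (K:ℝ)) * ∑ i, g (w i)) := by
  exact (measurable_const.mul (Finset.measurable_sum _
    (fun i _ => hgm.comp (measurable_pi_apply i))))

theorem avg_integrable (hg : Integrable g ν) :
    Integrable (fun w : Fin K → E => (1 / (K:ℝ)) * ∑ i, g (w i))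
      (Measure.pi fun _ : Fin K => ν) := by
  exact (integrable_finset_sum _ (fun i _ => pi_integrable_marg ν i g hg)).const_mul _

theorem avg_integral (hg : Integrable g ν) :
    ∫ w, (1 / (K:ℝ)) * ∑ i, g (w i) ∂(Measure.pi fun _ : Fin K => ν)
      = (if K = 0 then 0 else ∫ x, g x ∂ν) := by
  rw [integral_const_mul, integral_finset_sum _ (fun i _ => pi_integrable_marg ν i g hg)]
  simp only [pi_integral_marg]
  rw [Finset.sum_const, Finset.card_univ, Fintype.card_fin, nsmul_eq_mul]
  rcases Nat.eq_zero_or_pos K with h | h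
  · simp [h]
  · rw [if_neg h.ne']
    field_simp

theorem sq_sum_eq (w : Fin K → E) :
    ((1 / (K:ℝ)) * ∑ i, g (w i)) ^ 2
      = (1 / (K:ℝ))^2 * ∑ i, ∑ i', g (w i) * g (w i') := by
  rw [mul_pow, sq (∑ i, g (w i)), Finset.sum_mul_sum]

theorem avg_sq_integrable (hg : Integrable g ν)
    (hg2 : Integrable (fun x => g x ^ 2) ν) :
    Integrable (fun w : Fin K → E => ((1 / (K:ℝ)) * ∑ i, g (w i)) ^ 2)
      (Measure.pi fun _ : Fin K => ν) := by
  simp only [sq_sum_eq]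
  refine Integrable.const_mul ?_ _
  refine integrable_finset_sum _ (fun i _ => integrable_finset_sum _ (fun i' _ => ?_))
  rcases eq_or_ne i i' with rfl | hne
  · have := pi_integrable_marg (κ := Fin K) ν i (fun x => g x ^ 2) hg2
    simpa [sq] using this
  · exact pi_integrable_pair ν hne g g hg hg

theorem avg_sq_integral (hK : 0 < K) (hg : Integrable g ν)
    (hg2 : Integrable (fun x => g x ^ 2) ν) :
    ∫ w, ((1 / (K:ℝ)) * ∑ i, g (w i)) ^ 2 ∂(Measure.pi fun _ : Fin K => ν)
      = ((∫ x, g x ^ 2 ∂ν) + ((K:ℝ) - 1) * (∫ x, g x ∂ν)^2) / K := by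
  simp only [sq_sum_eq]
  rw [integral_const_mul]
  have hterm : ∀ i i' : Fin K, Integrable
      (fun w : Fin K → E => g (w i) * g (w i')) (Measure.pi fun _ : Fin K => ν) := by
    intro i i'
    rcases eq_or_ne i i' with rfl | hne
    · simpa [sq] using pi_integrable_marg (κ := Fin K) ν i (fun x => g x ^ 2) hg2
    · exact pi_integrable_pair ν hne g g hg hg
  rw [integral_finset_sum _ (fun i _ => integrable_finset_sum _ (fun i' _ => hterm i i'))]
  have : ∀ i : Fin K, ∫ w, ∑ i', g (w i) * g (w i') ∂(Measure.pi fun _ : Fin K => ν)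
      = (∫ x, g x ^ 2 ∂ν) + ((K:ℝ) - 1) * (∫ x, g x ∂ν)^2 := by
    intro i
    rw [integral_finset_sum _ (fun i' _ => hterm i i')]
    rw [← Finset.add_sum_erase _ _ (Finset.mem_univ i)]
    congr 1
    · have := pi_integral_marg (κ := Fin K) ν i (fun x => g x ^ 2)
      simp only [sq] at this ⊢
      exact this
    · have : ∀ i' ∈ Finset.univ.erase i,
          ∫ w, g (w i) * g (w i') ∂(Measure.pi fun _ : Fin K => ν)
            = (∫ x, g x ∂ν)^2 := by
        intro i' hi'
        rw [pi_integral_pair ν (Finset.ne_of_mem_erase hi').symm g g, sq]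
      rw [Finset.sum_congr rfl this, Finset.sum_const, Finset.card_erase_of_mem (Finset.mem_univ i),
        Finset.card_univ, Fintype.card_fin, nsmul_eq_mul, Nat.cast_sub hK, Nat.cast_one]
  rw [Finset.sum_congr rfl (fun i _ => this i), Finset.sum_const, Finset.card_univ,
    Fintype.card_fin, nsmul_eq_mul]
  field_simp

/-- Product layer: P z = ∏ j, g (z j) on Fin K → E. -/

theorem prodl_measurable (hgm : Measurable g) :
    Measurable (fun z : Fin K → E => ∏ j, g (z j)) :=
  Finset.measurable_prod _ (fun j _ => hgm.comp (measurable_pi_apply j))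

theorem prodl_integrable (hg : Integrable g ν) :
    Integrable (fun z : Fin K → E => ∏ j, g (z j)) (Measure.pi fun _ : Fin K => ν) :=
  pi_integrable_prod ν (fun _ => g) (fun _ => hg)

theorem prodl_integral :
    ∫ z, (∏ j, g (z j)) ∂(Measure.pi fun _ : Fin K => ν) = (∫ x, g x ∂ν) ^ K := by
  rw [pi_integral_prod ν (fun _ => g), Finset.prod_const, Finset.card_univ, Fintype.card_fin]

theorem prodl_sq_integrable (hg2 : Integrable (fun x => g x ^ 2) ν) :
    Integrable (fun z : Fin K → E => (∏ j, g (z j)) ^ 2) (Measure.pi fun _ : Fin K => ν) := by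
  have := pi_integrable_prod ν (fun _ : Fin K => fun x => g x ^ 2) (fun _ => hg2)
  simpa [Finset.prod_pow] using this

theorem prodl_sq_integral :
    ∫ z, (∏ j, g (z j)) ^ 2 ∂(Measure.pi fun _ : Fin K => ν)
      = (∫ x, g x ^ 2 ∂ν) ^ K := by
  have := pi_integral_prod ν (fun _ : Fin K => fun x => g x ^ 2)
  simp only [Finset.prod_pow] at this
  rw [this, Finset.prod_const, Finset.card_univ, Fintype.card_fin]

end layers

section nu
variable {α q : ℝ → ℝ}

theorem q_integrable (hqpdf : ∫ x, q x = 1) : Integrable q := by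
  by_contra h
  rw [integral_undef h] at hqpdf
  norm_num at hqpdf

theorem nu_prob (hq : ∀ x, 0 ≤ q x) (hqpdf : ∫ x, q x = 1) : IsProbabilityMeasure
    (MeasureTheory.volume.withDensity (fun x => ENNReal.ofReal (q x))) := by
  constructor
  rw [withDensity_apply _ MeasurableSet.univ, Measure.restrict_univ,
    ← ofReal_integral_eq_lintegral_ofReal (q_integrable hqpdf)
      (Filter.Eventually.of_forall hq), hqpdf, ENNReal.ofReal_one]

theorem nu_integral (hq : ∀ x, 0 ≤ q x) (hqmeas : Measurable q) (g : ℝ → ℝ) :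
    ∫ x, g x ∂(MeasureTheory.volume.withDensity (fun x => ENNReal.ofReal (q x)))
      = ∫ x, q x * g x := by
  have := integral_withDensity_eq_integral_smul
    (μ := volume) (f := fun x => (q x).toNNReal) hqmeas.real_toNNReal g
  rw [show (fun x => ENNReal.ofReal (q x)) = fun x => ((q x).toNNReal : ℝ≥0∞) from rfl, this]
  congr 1
  ext x
  simp [NNReal.smul_def, Real.coe_toNNReal _ (hq x)]

theorem nu_integrable_iff (hq : ∀ x, 0 ≤ q x) (hqmeas : Measurable q) (g : ℝ → ℝ) :
    Integrable g (MeasureTheory.volume.withDensity (fun x => ENNReal.ofReal (q x)))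
      ↔ Integrable (fun x => q x * g x) := by
  have := integrable_withDensity_iff_integrable_smul
    (μ := volume) (f := fun x => (q x).toNNReal) hqmeas.real_toNNReal (g := g)
  rw [show (fun x => ENNReal.ofReal (q x)) = fun x => ((q x).toNNReal : ℝ≥0∞) from rfl, this]
  constructor <;> intro h <;>
  · refine h.congr (Filter.Eventually.of_forall fun x => ?_)
    simp [NNReal.smul_def, Real.coe_toNNReal _ (hq x)]

theorem qY_eq (habs : ∀ x, q x = 0 → α x = 0) (x : ℝ) : q x * (α x / q x) = α x := by
  rcases eq_or_ne (q x) 0 with h | h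
  · simp [h, habs x h]
  · field_simp

theorem qY2_eq (habs : ∀ x, q x = 0 → α x = 0) (x : ℝ) :
    q x * (α x / q x) ^ 2 = α x ^ 2 / q x := by
  rcases eq_or_ne (q x) 0 with h | h
  · simp [h, habs x h]
  · field_simp

theorem Y_integral (hq : ∀ x, 0 ≤ q x) (hqmeas : Measurable q)
    (habs : ∀ x, q x = 0 → α x = 0) :
    ∫ x, α x / q x ∂(MeasureTheory.volume.withDensity (fun x => ENNReal.ofReal (q x)))
      = ∫ x, α x := by
  rw [nu_integral hq hqmeas]
  congr 1; ext x; exact qY_eq habs x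

theorem Y2_integral (hq : ∀ x, 0 ≤ q x) (hqmeas : Measurable q)
    (habs : ∀ x, q x = 0 → α x = 0) :
    ∫ x, (α x / q x) ^ 2 ∂(MeasureTheory.volume.withDensity (fun x => ENNReal.ofReal (q x)))
      = ∫ x, α x ^ 2 / q x := by
  rw [nu_integral hq hqmeas]
  congr 1; ext x; exact qY2_eq habs x

theorem Y_integrable (hq : ∀ x, 0 ≤ q x) (hqmeas : Measurable q)
    (habs : ∀ x, q x = 0 → α x = 0) (hαint : Integrable α) :
    Integrable (fun x => α x / q x)
      (MeasureTheory.volume.withDensity (fun x => ENNReal.ofReal (q x))) := by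
  rw [nu_integrable_iff hq hqmeas]
  exact hαint.congr (Filter.Eventually.of_forall fun x => (qY_eq habs x).symm)

theorem Y2_integrable (hq : ∀ x, 0 ≤ q x) (hqmeas : Measurable q)
    (habs : ∀ x, q x = 0 → α x = 0) (hratio : Integrable (fun x => (α x) ^ 2 / q x)) :
    Integrable (fun x => (α x / q x) ^ 2)
      (MeasureTheory.volume.withDensity (fun x => ENNReal.ofReal (q x))) := by
  rw [nu_integrable_iff hq hqmeas]
  exact hratio.congr (Filter.Eventually.of_forall fun x => (qY2_eq habs x).symm)

end nu

section structure_lemmas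

/-- Joint law of an independent family is the product measure. -/
theorem joint_law {Ω E ι : Type*} [MeasurableSpace Ω] [MeasurableSpace E] [Fintype ι]
    (μ : Measure Ω) [IsProbabilityMeasure μ] (ν : Measure E) [IsProbabilityMeasure ν]
    (X : ι → Ω → E)
    (hindep : ProbabilityTheory.iIndepFun X μ)
    (hlaw : ∀ i, Measure.map (X i) μ = ν) :
    Measure.map (fun ω (i : ι) => X i ω) μ = Measure.pi (fun _ => ν) := by
  have hae : ∀ i, AEMeasurable (X i) μ := by
    intro i
    by_contra h
    have := hlaw i
    rw [Measure.map_of_not_aemeasurable h] at this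
    have h1 : ν Set.univ = 1 := measure_univ
    rw [← this] at h1
    simp at h1
  have haejoint : AEMeasurable (fun ω (i : ι) => X i ω) μ := by
    refine ⟨fun ω i => (hae i).mk _ ω,
      measurable_pi_lambda _ (fun i => (hae i).measurable_mk), ?_⟩
    have := ae_all_iff.2 (fun i => (hae i).ae_eq_mk)
    filter_upwards [this] with ω hω
    funext i
    exact hω i
  refine (Measure.pi_eq fun s hs => ?_).symm
  rw [Measure.map_apply_of_aemeasurable haejoint (MeasurableSet.univ_pi hs)]
  have hpre : (fun ω (i : ι) => X i ω) ⁻¹' Set.univ.pi s = ⋂ i, X i ⁻¹' s i := by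
    ext ω; simp [Set.mem_pi]
  have huniv : ⋂ i, X i ⁻¹' s i = ⋂ i ∈ Finset.univ, X i ⁻¹' s i := by simp
  rw [hpre, huniv, hindep.measure_inter_preimage_eq_mul Finset.univ (fun i _ => hs i)]
  refine Finset.prod_congr rfl fun i _ => ?_
  rw [← hlaw i, Measure.map_apply_of_aemeasurable (hae i) (hs i)]

/-- The uncurrying (with an l-j swap) map is measure preserving. -/
theorem nested_mp {n N M d : ℕ} {E : Type*} [MeasurableSpace E]
    (ν : Measure E) [IsProbabilityMeasure ν] :
    MeasurePreserving
      (fun (y : Fin n → Fin N → Fin d → Fin M → E)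
        (p : Fin n × Fin N × Fin M × Fin d) => y p.1 p.2.1 p.2.2.2 p.2.2.1)
      (Measure.pi fun _ => Measure.pi fun _ => Measure.pi fun _ => Measure.pi fun _ => ν)
      (Measure.pi fun _ => ν) := by
  have hmeas : Measurable
      (fun (y : Fin n → Fin N → Fin d → Fin M → E)
        (p : Fin n × Fin N × Fin M × Fin d) => y p.1 p.2.1 p.2.2.2 p.2.2.1) := by
    refine measurable_pi_iff.mpr fun p => ?_
    exact ((((measurable_pi_apply p.1).comp measurable_id).eval (a := p.2.1)).eval
      (a := p.2.2.2)).eval (a := p.2.2.1)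
  refine ⟨hmeas, ?_⟩
  refine (Measure.pi_eq fun s hs => ?_).symm
  rw [Measure.map_apply hmeas (MeasurableSet.univ_pi hs)]
  have hpre : (fun (y : Fin n → Fin N → Fin d → Fin M → E)
        (p : Fin n × Fin N × Fin M × Fin d) => y p.1 p.2.1 p.2.2.2 p.2.2.1) ⁻¹'
        Set.univ.pi s
      = Set.univ.pi fun k => Set.univ.pi fun i => Set.univ.pi fun j => Set.univ.pi fun l =>
          s (k, i, l, j) := by
    ext y
    simp only [Set.mem_preimage, Set.mem_pi, Set.mem_univ, forall_true_left, Prod.forall]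
    constructor
    · intro h k i j l; exact h k i l j
    · intro h k i l j; exact h k i j l
  rw [hpre, Measure.pi_pi]
  simp_rw [Measure.pi_pi]
  rw [Fintype.prod_prod_type]
  refine Finset.prod_congr rfl fun k _ => ?_
  rw [Fintype.prod_prod_type]
  refine Finset.prod_congr rfl fun i _ => ?_
  rw [Fintype.prod_prod_type]
  exact Finset.prod_comm
end structure_lemmas

theorem final_algebra (m s : ℝ) (hm : m ≠ 0) (n N M d : ℕ) (hN0 : (N:ℝ) ≠ 0)
    (hM0 : (M:ℝ) ≠ 0) :
    ((m^(n*d))⁻¹)^2 * ((((s + ((M:ℝ)-1)*m^2)/M)^d + ((N:ℝ)-1)*(m^d)^2)/N)^n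
        - 2*(m^(n*d))⁻¹*(m^d)^n + 1
      = ((1/(N:ℝ))*((s/m^2)/M + ((M:ℝ)-1)/M)^d + ((N:ℝ)-1)/N)^n - 1 := by
  have h1 : (s + ((M:ℝ)-1)*m^2)/M = m^2 * ((s/m^2)/M + ((M:ℝ)-1)/M) := by
    field_simp
  rw [h1, mul_pow]
  set c : ℝ := (s/m^2)/M + ((M:ℝ)-1)/M with hc
  have h2 : ((m:ℝ)^2)^d = (m^d)^2 := by rw [← pow_mul, ← pow_mul, Nat.mul_comm]
  rw [h2]
  have h3 : ((m^d)^2 * c^d + ((N:ℝ)-1)*(m^d)^2)/N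
      = (m^d)^2 * ((1/(N:ℝ))*c^d + ((N:ℝ)-1)/N) := by
    field_simp
  rw [h3, mul_pow]
  have h4 : (((m:ℝ)^d)^2)^n = (m^(n*d))^2 := by
    rw [← pow_mul, ← pow_mul, ← pow_mul]
    congr 1
    ring
  rw [h4]
  have h5 : (m^d)^n = m^(n*d) := by rw [← pow_mul, Nat.mul_comm]
  rw [h5]
  have hP0 : m^(n*d) ≠ 0 := pow_ne_zero _ hm
  field_simp
  ring


/-- Relative variance identity for the normalizing-constant estimate of the space-time
particle filter applied to a fully i.i.d. target `∏_{k,j} α(x_k(j))`, with all proposal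
samples i.i.d. with density `q`:
`E[(p^{N,M}/p - 1)^2] = ((1/N)((ρ/M) + (M-1)/M)^d + (N-1)/N)^n - 1`,
where `ρ = ∫ α²/q / (∫ α)²` and `p = (∫ α)^{nd}`. -/
theorem stmt3 {Ω : Type*} [MeasurableSpace Ω] (μ : Measure Ω) [IsProbabilityMeasure μ]
    (n N M d : ℕ) (hn : 0 < n) (hN : 0 < N) (hM : 0 < M) (hd : 0 < d)
    (α q : ℝ → ℝ) (hα : ∀ x, 0 ≤ α x) (hq : ∀ x, 0 ≤ q x)
    (hαmeas : Measurable α) (hqmeas : Measurable q)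
    (hqpdf : ∫ x, q x = 1)
    (hαint : Integrable α)
    (hαpos : 0 < ∫ x, α x)
    (habs : ∀ x, q x = 0 → α x = 0)
    (hratio : Integrable (fun x => (α x) ^ 2 / q x))
    (X : Fin n × Fin N × Fin M × Fin d → Ω → ℝ)
    (hindep : iIndepFun X μ)
    (hlaw : ∀ p, Measure.map (X p) μ
      = MeasureTheory.volume.withDensity (fun x => ENNReal.ofReal (q x))) :
    (∫ ω,
        ((∏ k : Fin n, (1 / (N : ℝ)) * ∑ i : Fin N, ∏ j : Fin d,
            (1 / (M : ℝ)) * ∑ l : Fin M,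
              α (X (k, i, l, j) ω) / q (X (k, i, l, j) ω))
          / (∫ x, α x) ^ (n * d) - 1) ^ 2 ∂μ)
      = ((1 / (N : ℝ)) *
            (((∫ x, (α x) ^ 2 / q x) / (∫ x, α x) ^ 2) / M + ((M : ℝ) - 1) / M) ^ d
          + ((N : ℝ) - 1) / N) ^ n - 1 := by
  classical
  set ν : Measure ℝ := MeasureTheory.volume.withDensity (fun x => ENNReal.ofReal (q x))
    with hνdef
  haveI hνP : IsProbabilityMeasure ν := nu_prob hq hqpdf
  set Y : ℝ → ℝ := fun x => α x / q x with hYdef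
  have hYmeas : Measurable Y := hαmeas.div hqmeas
  have hYint : Integrable Y ν := Y_integrable hq hqmeas habs hαint
  have hY2int : Integrable (fun x => Y x ^ 2) ν := Y2_integrable hq hqmeas habs hratio
  have hYval : ∫ x, Y x ∂ν = ∫ x, α x := Y_integral hq hqmeas habs
  have hY2val : ∫ x, Y x ^ 2 ∂ν = ∫ x, α x ^ 2 / q x := Y2_integral hq hqmeas habs
  -- layer 1 : T over Fin M
  set π1 : Measure (Fin M → ℝ) := Measure.pi fun _ => ν with hπ1
  haveI iP1 : IsProbabilityMeasure π1 := by rw [hπ1]; infer_instance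
  set T : (Fin M → ℝ) → ℝ := fun v => (1 / (M:ℝ)) * ∑ l, Y (v l) with hTdef
  have hTint : Integrable T π1 := avg_integrable ν M Y hYint
  have hTsqint : Integrable (fun v => T v ^ 2) π1 := avg_sq_integrable ν M Y hYint hY2int
  have hTval : ∫ v, T v ∂π1 = ∫ x, α x := by
    rw [hTdef, hπ1, avg_integral ν M Y hYint, if_neg hM.ne', hYval]
  have hTsqval : ∫ v, T v ^ 2 ∂π1
      = ((∫ x, α x ^ 2 / q x) + ((M:ℝ)-1) * (∫ x, α x)^2)/M := by
    rw [hTdef, hπ1, avg_sq_integral ν M Y hM hYint hY2int, hYval, hY2val]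
  -- layer 2 : A over Fin d
  set π2 : Measure (Fin d → Fin M → ℝ) := Measure.pi fun _ => π1 with hπ2
  haveI iP2 : IsProbabilityMeasure π2 := by rw [hπ2]; infer_instance
  set A : (Fin d → Fin M → ℝ) → ℝ := fun z => ∏ j, T (z j) with hAdef
  have hAint : Integrable A π2 := prodl_integrable π1 d T hTint
  have hAsqint : Integrable (fun z => A z ^ 2) π2 := prodl_sq_integrable π1 d T hTsqint
  have hAval : ∫ z, A z ∂π2 = (∫ x, α x) ^ d := by
    rw [hAdef, hπ2, prodl_integral π1 d T, hTval]
  have hAsqval : ∫ z, A z ^ 2 ∂π2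
      = (((∫ x, α x ^ 2 / q x) + ((M:ℝ)-1) * (∫ x, α x)^2)/M) ^ d := by
    rw [hAdef, hπ2, prodl_sq_integral π1 d T, hTsqval]
  -- layer 3 : S over Fin N
  set π3 : Measure (Fin N → Fin d → Fin M → ℝ) := Measure.pi fun _ => π2 with hπ3
  haveI iP3 : IsProbabilityMeasure π3 := by rw [hπ3]; exact Measure.pi.instIsProbabilityMeasure (μ := fun _ : Fin N => π2)
  set S : (Fin N → Fin d → Fin M → ℝ) → ℝ := fun w => (1 / (N:ℝ)) * ∑ i, A (w i) with hSdef
  have hSint : Integrable S π3 := avg_integrable π2 N A hAint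
  have hSsqint : Integrable (fun w => S w ^ 2) π3 := avg_sq_integrable π2 N A hAint hAsqint
  have hSval : ∫ w, S w ∂π3 = (∫ x, α x) ^ d := by
    rw [hSdef, hπ3, avg_integral π2 N A hAint, if_neg hN.ne', hAval]
  have hSsqval : ∫ w, S w ^ 2 ∂π3
      = ((((∫ x, α x ^ 2 / q x) + ((M:ℝ)-1) * (∫ x, α x)^2)/M) ^ d
          + ((N:ℝ)-1) * ((∫ x, α x) ^ d)^2)/N := by
    rw [hSdef, hπ3, avg_sq_integral π2 N A hN hAint hAsqint, hAval, hAsqval]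
  -- layer 4 : Z over Fin n
  set π4 : Measure (Fin n → Fin N → Fin d → Fin M → ℝ) := Measure.pi fun _ => π3 with hπ4
  haveI iP4 : IsProbabilityMeasure π4 := by rw [hπ4]; exact Measure.pi.instIsProbabilityMeasure (μ := fun _ : Fin n => π3)
  set Z : (Fin n → Fin N → Fin d → Fin M → ℝ) → ℝ := fun y => ∏ k, S (y k) with hZdef
  have hZint : Integrable Z π4 := prodl_integrable π3 n S hSint
  have hZsqint : Integrable (fun y => Z y ^ 2) π4 := prodl_sq_integrable π3 n S hSsqint
  have hZval : ∫ y, Z y ∂π4 = ((∫ x, α x) ^ d) ^ n := by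
    rw [hZdef, hπ4, prodl_integral π3 n S, hSval]
  have hZsqval : ∫ y, Z y ^ 2 ∂π4
      = (((((∫ x, α x ^ 2 / q x) + ((M:ℝ)-1) * (∫ x, α x)^2)/M) ^ d
          + ((N:ℝ)-1) * ((∫ x, α x) ^ d)^2)/N) ^ n := by
    rw [hZdef, hπ4, prodl_sq_integral π3 n S, hSsqval]
  -- transfer from Ω to the flat product space
  have hae : ∀ p, AEMeasurable (X p) μ := by
    intro p
    by_contra h
    have h2 := hlaw p
    rw [Measure.map_of_not_aemeasurable h] at h2
    have h3 : ν Set.univ = 1 := measure_univ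
    rw [← h2] at h3
    simp at h3
  have haejoint : AEMeasurable (fun ω (p : Fin n × Fin N × Fin M × Fin d) => X p ω) μ :=
    ⟨fun ω p => (hae p).mk _ ω,
      measurable_pi_lambda _ (fun p => (hae p).measurable_mk), by
        filter_upwards [ae_all_iff.2 (fun p => (hae p).ae_eq_mk)] with ω hω
        funext p
        exact hω p⟩
  have hmap : Measure.map (fun ω (p : Fin n × Fin N × Fin M × Fin d) => X p ω) μ
      = Measure.pi fun _ => ν := joint_law μ ν X hindep (fun p => hlaw p)
  set P : ℝ := (∫ x, α x) ^ (n * d) with hPdef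
  set F : ((Fin n × Fin N × Fin M × Fin d) → ℝ) → ℝ := fun x =>
      ((∏ k : Fin n, (1 / (N:ℝ)) * ∑ i : Fin N, ∏ j : Fin d,
          (1 / (M:ℝ)) * ∑ l : Fin M, Y (x (k, i, l, j))) / P - 1) ^ 2 with hFdef
  have hFmeas : Measurable F := by
    apply Measurable.pow_const
    apply Measurable.sub _ measurable_const
    apply Measurable.div_const
    exact Finset.measurable_prod _ fun k _ =>
      (Finset.measurable_sum _ fun i _ => Finset.measurable_prod _ fun j _ =>
        ((Finset.measurable_sum _ fun l _ =>
          hYmeas.comp (measurable_pi_apply _)).const_mul _)).const_mul _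
  have step1 : (∫ ω,
        ((∏ k : Fin n, (1 / (N : ℝ)) * ∑ i : Fin N, ∏ j : Fin d,
            (1 / (M : ℝ)) * ∑ l : Fin M,
              α (X (k, i, l, j) ω) / q (X (k, i, l, j) ω))
          / (∫ x, α x) ^ (n * d) - 1) ^ 2 ∂μ)
      = ∫ x, F x ∂(Measure.pi fun _ : Fin n × Fin N × Fin M × Fin d => ν) := by
    have h := integral_map (φ := fun ω (p : Fin n × Fin N × Fin M × Fin d) => X p ω)
      haejoint (f := F) hFmeas.aestronglyMeasurable
    rw [hmap] at h
    exact h.symm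
  have hmp := nested_mp (n := n) (N := N) (M := M) (d := d) ν
  have step2 : ∫ x, F x ∂(Measure.pi fun _ : Fin n × Fin N × Fin M × Fin d => ν)
      = ∫ y, F (fun p => y p.1 p.2.1 p.2.2.2 p.2.2.1) ∂π4 := by
    rw [← hmp.map_eq, integral_map hmp.measurable.aemeasurable hFmeas.aestronglyMeasurable]
  have step3 : ∀ y, F (fun p => y p.1 p.2.1 p.2.2.2 p.2.2.1) = (Z y / P - 1) ^ 2 :=
    fun y => rfl
  have hexp : ∀ y, (Z y / P - 1) ^ 2 = (P⁻¹)^2 * (Z y)^2 - 2*P⁻¹*(Z y) + 1 := by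
    intro y
    rw [div_eq_mul_inv]
    ring
  have step4 : ∫ y, F (fun p => y p.1 p.2.1 p.2.2.2 p.2.2.1) ∂π4
      = (P⁻¹)^2 * (∫ y, Z y ^ 2 ∂π4) - 2*P⁻¹*(∫ y, Z y ∂π4) + 1 := by
    simp_rw [step3, hexp]
    have h1 : Integrable (fun y => (P⁻¹)^2 * Z y ^ 2) π4 := hZsqint.const_mul _
    have h2 : Integrable (fun y => 2*P⁻¹ * Z y) π4 := hZint.const_mul _
    have h3 : Integrable (fun y => (P⁻¹)^2 * Z y ^ 2 - 2*P⁻¹ * Z y) π4 := h1.sub h2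
    rw [integral_add h3 (integrable_const 1), integral_sub h1 h2,
      integral_const_mul, integral_const_mul, integral_const]
    simp [measure_univ]
  rw [step1, step2, step4, hZval, hZsqval, hPdef]
  have hm0 : (∫ x, α x) ≠ 0 := ne_of_gt hαpos
  have hN0 : ((N:ℝ)) ≠ 0 := Nat.cast_ne_zero.mpr hN.ne'
  have hM0 : ((M:ℝ)) ≠ 0 := Nat.cast_ne_zero.mpr hM.ne'
  exact final_algebra (∫ x, α x) (∫ x, α x ^ 2 / q x) hm0 n N M d hN0 hM0
end

section
/- Let α,q : ℝ → ℝ≥0 with q a probability density, α measurable with 0 < ∫α < ∞ and α ≪ q. Let φ : ℝ → ℝ be bounded measurable. If (X_l)_{l≥1} are i.i.d. with density q and W_l = α(X_l)/q(X_l), then (∑_{l=1}^M W_l φ(X_l))/(∑_{l=1}^M W_l) converges in probability as M → ∞ to π(φ) := ∫α(x)φ(x)dx / ∫α(x)dx. -/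
open MeasureTheory ProbabilityTheory Filter Topology

/-- Consistency of the self-normalized importance sampling estimator: with `X_l` i.i.d.
from the proposal density `q`, weights `W_l = α(X_l)/q(X_l)` and bounded measurable `φ`,
`(∑_{l<M} W_l φ(X_l)) / (∑_{l<M} W_l) → π(φ) = ∫αφ/∫α` in probability as `M → ∞`. -/
theorem stmt13 {Ω : Type*} [MeasurableSpace Ω] (μ : Measure Ω) [IsProbabilityMeasure μ]
    (α q : ℝ → ℝ) (hα : ∀ x, 0 ≤ α x) (hq : ∀ x, 0 ≤ q x)
    (hαmeas : Measurable α) (hqmeas : Measurable q)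
    (hqpdf : ∫ x, q x = 1) (hαint : Integrable α) (hαpos : 0 < ∫ x, α x)
    (habs : ∀ x, q x = 0 → α x = 0)
    (φ : ℝ → ℝ) (hφmeas : Measurable φ) (C : ℝ) (hφbdd : ∀ x, |φ x| ≤ C)
    (X : ℕ → Ω → ℝ)
    (hindep : iIndepFun X μ)
    (hlaw : ∀ l, Measure.map (X l) μ
      = MeasureTheory.volume.withDensity (fun x => ENNReal.ofReal (q x))) :
    TendstoInMeasure μ
      (fun M ω => (∑ l ∈ Finset.range M, (α (X l ω) / q (X l ω)) * φ (X l ω))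
        / (∑ l ∈ Finset.range M, α (X l ω) / q (X l ω)))
      atTop
      (fun _ => (∫ x, α x * φ x) / ∫ x, α x) := by
  have hdens : (fun x => ENNReal.ofReal (q x)) = (fun x => ((Real.toNNReal (q x) : NNReal) : ENNReal)) :=
    rfl
  set ν : Measure ℝ := volume.withDensity (fun x => ENNReal.ofReal (q x)) with hνdef
  have hqint : Integrable q := by
    by_contra h
    rw [integral_undef h] at hqpdf
    norm_num at hqpdf
  have hqnn_meas : Measurable (fun x => Real.toNNReal (q x)) := hqmeas.real_toNNReal
  have hνuniv : ν Set.univ = 1 := by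
    rw [hνdef, withDensity_apply _ MeasurableSet.univ, Measure.restrict_univ,
      ← ofReal_integral_eq_lintegral_ofReal hqint (Filter.Eventually.of_forall hq), hqpdf]
    simp
  have hνprob : IsProbabilityMeasure ν := ⟨hνuniv⟩
  have hXae : ∀ l, AEMeasurable (X l) μ := by
    intro l
    by_contra h
    have h0 := Measure.map_of_not_aemeasurable h
    rw [hlaw l] at h0
    have := hνuniv
    rw [h0] at this
    simp at this
  set f : ℝ → ℝ := fun x => α x / q x with hfdef
  have hfmeas : Measurable f := hαmeas.div hqmeas
  set g : ℝ → ℝ := fun x => α x / q x * φ x with hgdef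
  have hgmeas : Measurable g := hfmeas.mul hφmeas
  have key1 : ∀ x, q x * f x = α x := by
    intro x
    rcases eq_or_lt_of_le (hq x) with h | h
    · simp [hfdef, ← h, habs x h.symm]
    · show q x * (α x / q x) = α x
      field_simp [ne_of_gt h]
  have key2 : ∀ x, q x * g x = α x * φ x := by
    intro x
    have : q x * g x = (q x * f x) * φ x := by simp [hgdef, hfdef]; ring
    rw [this, key1]
  have hαφint : Integrable (fun x => α x * φ x) := by
    have := hαint.bdd_mul hφmeas.aestronglyMeasurable
      (Filter.Eventually.of_forall fun x => (Real.norm_eq_abs _).trans_le (hφbdd x))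
    exact this.congr (Filter.Eventually.of_forall fun x => mul_comm _ _)
  -- integrals and integrability over ν
  have smul_eq : ∀ (h : ℝ → ℝ) x, (Real.toNNReal (q x)) • h x = q x * h x := by
    intro h x
    simp [NNReal.smul_def, Real.coe_toNNReal _ (hq x)]
  have hInt_f : ∫ x, f x ∂ν = ∫ x, α x := by
    rw [hνdef, hdens, integral_withDensity_eq_integral_smul hqnn_meas]
    refine integral_congr_ae (Filter.Eventually.of_forall fun x => ?_)
    simp only [NNReal.smul_def, Real.coe_toNNReal _ (hq x)]
    exact key1 x
  have hInt_g : ∫ x, g x ∂ν = ∫ x, α x * φ x := by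
    rw [hνdef, hdens, integral_withDensity_eq_integral_smul hqnn_meas]
    refine integral_congr_ae (Filter.Eventually.of_forall fun x => ?_)
    simp only [NNReal.smul_def, Real.coe_toNNReal _ (hq x)]
    exact key2 x
  have hfint : Integrable f ν := by
    rw [hνdef, hdens, integrable_withDensity_iff_integrable_smul hqnn_meas]
    refine hαint.congr (Filter.Eventually.of_forall fun x => ?_)
    simp only [NNReal.smul_def, Real.coe_toNNReal _ (hq x)]
    exact (key1 x).symm
  have hgint : Integrable g ν := by
    rw [hνdef, hdens, integrable_withDensity_iff_integrable_smul hqnn_meas]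
    refine hαφint.congr (Filter.Eventually.of_forall fun x => ?_)
    simp only [NNReal.smul_def, Real.coe_toNNReal _ (hq x)]
    exact (key2 x).symm
  -- random variables
  have hYint : Integrable (fun ω => f (X 0 ω)) μ := by
    have := (integrable_map_measure (hfmeas.aestronglyMeasurable) (hXae 0)).mp
      (by rw [hlaw 0]; exact hfint)
    exact this
  have hZint : Integrable (fun ω => g (X 0 ω)) μ := by
    have := (integrable_map_measure (hgmeas.aestronglyMeasurable) (hXae 0)).mp
      (by rw [hlaw 0]; exact hgint)
    exact this
  have hXident : ∀ i, IdentDistrib (X i) (X 0) μ μ := fun i =>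
    ⟨hXae i, hXae 0, by rw [hlaw i, hlaw 0]⟩
  have hEY : ∫ ω, f (X 0 ω) ∂μ = ∫ x, α x := by
    rw [← integral_map (hXae 0) hfmeas.aestronglyMeasurable, hlaw 0, hInt_f]
  have hEZ : ∫ ω, g (X 0 ω) ∂μ = ∫ x, α x * φ x := by
    rw [← integral_map (hXae 0) hgmeas.aestronglyMeasurable, hlaw 0, hInt_g]
  have hA := strong_law_ae_real (fun i ω => f (X i ω)) hYint
    (fun i j hij => (hindep.indepFun hij).comp hfmeas hfmeas)
    (fun i => (hXident i).comp hfmeas)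
  have hB := strong_law_ae_real (fun i ω => g (X i ω)) hZint
    (fun i j hij => (hindep.indepFun hij).comp hgmeas hgmeas)
    (fun i => (hXident i).comp hgmeas)
  rw [hEY] at hA
  rw [hEZ] at hB
  have hae : ∀ᵐ ω ∂μ, Tendsto
      (fun M => (∑ l ∈ Finset.range M, (α (X l ω) / q (X l ω)) * φ (X l ω))
        / (∑ l ∈ Finset.range M, α (X l ω) / q (X l ω))) atTop
      (𝓝 ((∫ x, α x * φ x) / ∫ x, α x)) := by
    filter_upwards [hA, hB] with ω h1 h2
    have hdiv := h2.div h1 (ne_of_gt hαpos)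
    apply hdiv.congr'
    filter_upwards [eventually_ge_atTop 1] with n hn
    have hn' : (n : ℝ) ≠ 0 := by positivity
    exact div_div_div_cancel_right₀ hn' _ _
  have hmeas : ∀ M : ℕ, AEStronglyMeasurable
      (fun ω => (∑ l ∈ Finset.range M, (α (X l ω) / q (X l ω)) * φ (X l ω))
        / (∑ l ∈ Finset.range M, α (X l ω) / q (X l ω))) μ := by
    intro M
    exact ((Finset.aemeasurable_fun_sum _ fun l _ => hgmeas.comp_aemeasurable (hXae l)).div
      (Finset.aemeasurable_fun_sum _ fun l _ => hfmeas.comp_aemeasurable (hXae l))).aestronglyMeasurable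
  exact tendstoInMeasure_of_tendsto_ae hmeas hae
end
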